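/- Let G be a moral DAG (a DAG with no v-structures) with covered edge x→y, and let G' be the DAG obtained from G by reversing x→y to y→x. Then for every edge e of G neither of whose endpoints lies in {x,y} (such e is also an edge of G'), e is a covered edge of G if and only if e is a covered edge of G'. -/
import Mathlib


/-- A directed graph (given by its edge relation) is a DAG if it has no directed cycles. -/
def IsDAG {V : Type*} (E : V → V → Prop) : Prop :=
  ∀ v : V, ¬ Relation.TransGen E v v

/-- The set of parents of `v` in the directed graph `E`. -/
def parents {V : Type*} (E : V → V → Prop) (v : V) : Set V := {u | E u v}

/-- An arc `x → y` of `E` is a covered edge if `Pa(x) = Pa(y) \ {x}`. -/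
def CoveredEdge {V : Type*} (E : V → V → Prop) (x y : V) : Prop :=
  E x y ∧ parents E x = parents E y \ {x}

/-- The set of covered edges of `E`, as ordered pairs. -/
def coveredEdges {V : Type*} (E : V → V → Prop) : Set (V × V) :=
  {p | CoveredEdge E p.1 p.2}

/-- The skeleton (undirected adjacency) of a directed graph. -/
def Skel {V : Type*} (E : V → V → Prop) (u v : V) : Prop := E u v ∨ E v u

/-- `(u, v, w)` is a v-structure: `u → v ← w` with `u ≠ w` non-adjacent. -/
def VStruct {V : Type*} (E : V → V → Prop) (u v w : V) : Prop :=
  u ≠ w ∧ E u v ∧ E w v ∧ ¬ Skel E u w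

/-- Two directed graphs are Markov equivalent: same skeleton and same v-structures. -/
def MarkovEquiv {V : Type*} (E E' : V → V → Prop) : Prop :=
  (∀ u v, Skel E u v ↔ Skel E' u v) ∧ (∀ u v w, VStruct E u v w ↔ VStruct E' u v w)

/-- Minimum vertex cover number of a set of (directed) edges. -/
noncomputable def mvc {V : Type*} [Fintype V] (F : Set (V × V)) : ℕ :=
  sInf {n | ∃ S : Finset V, (∀ p ∈ F, p.1 ∈ S ∨ p.2 ∈ S) ∧ S.card = n}

/-- The graph obtained from `E` by reversing the arc `x → y` to `y → x`. -/
def reverseEdge {V : Type*} (E : V → V → Prop) (x y : V) : V → V → Prop :=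
  fun u v => (E u v ∧ ¬(u = x ∧ v = y)) ∨ (u = y ∧ v = x)

/-- A moral DAG is a DAG with no v-structures. -/
def Moral {V : Type*} (E : V → V → Prop) : Prop := ∀ u v w, ¬ VStruct E u v w

/-- `w` is a direct child of `v`: `v → w` is an arc and there is no directed
path from `v` to `w` of length at least 2 (i.e. through an intermediate vertex). -/
def DirectChild {V : Type*} (E : V → V → Prop) (v w : V) : Prop :=
  E v w ∧ ∀ z : V, ¬ (Relation.TransGen E v z ∧ Relation.TransGen E z w)


/-- In a moral DAG with covered edge `x → y`, reversing `x → y` leaves the covered-edge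
status of every edge with no endpoint in `{x, y}` unchanged. -/
theorem coveredEdge_reverse_of_disjoint_endpoints
    {V : Type*} (E : V → V → Prop) (x y : V)
    (hE : IsDAG E) (hm : Moral E) (hxy : CoveredEdge E x y)
    (u v : V) (huv : E u v)
    (hux : u ≠ x) (huy : u ≠ y) (hvx : v ≠ x) (hvy : v ≠ y) :
    CoveredEdge E u v ↔ CoveredEdge (reverseEdge E x y) u v := by
  have hu : parents (reverseEdge E x y) u = parents E u := by
    ext z
    simp only [parents, reverseEdge, Set.mem_setOf_eq]
    constructor
    · rintro (⟨h, -⟩ | ⟨-, rfl⟩)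
      · exact h
      · exact absurd rfl hux
    · intro h
      exact Or.inl ⟨h, fun ⟨_, h2⟩ => huy h2⟩
  have hv : parents (reverseEdge E x y) v = parents E v := by
    ext z
    simp only [parents, reverseEdge, Set.mem_setOf_eq]
    constructor
    · rintro (⟨h, -⟩ | ⟨-, rfl⟩)
      · exact h
      · exact absurd rfl hvx
    · intro h
      exact Or.inl ⟨h, fun ⟨_, h2⟩ => hvy h2⟩
  constructor
  · rintro ⟨-, hp⟩
    exact ⟨Or.inl ⟨huv, fun ⟨h1, h2⟩ => hux h1⟩, by rw [hu, hv, hp]⟩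
  · rintro ⟨-, hp⟩
    exact ⟨huv, by rw [hu, hv] at hp; rw [hp]⟩
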